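/- Let D = ∂/∂X + Σ_{i=1}^n (a_i(X)·Y_i + b_i(X))·∂/∂Y_i be a Shamsuddin derivation of K[X, Y_1,…,Y_n] with a_i(X), b_i(X) ∈ K[X], n ≥ 1. Suppose there exist an index i ∈ {1,…,n} and a polynomial h ∈ K[X] with h'(X) = a_i(X)·h(X) + b_i(X). Then the elementary automorphism σ defined by σ(X) = X, σ(Y_i) = 2Y_i − h(X), and σ(Y_j) = Y_j for j ≠ i commutes with D; in particular σ ≠ id and Tame_D(K[X, Y_1,…,Y_n]) ≠ {id}. -/

import Mathlib

open MvPolynomial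

/-- An elementary automorphism of `K[X_1,…,X_n]`: there are an index `i`, a nonzero scalar `a`
and a polynomial `f` not involving `X i` such that `ρ (X i) = a • X i + f` and `ρ` fixes the
other variables. -/
def IsElementary {K : Type*} [CommSemiring K] {n : ℕ}
    (ρ : MvPolynomial (Fin n) K ≃ₐ[K] MvPolynomial (Fin n) K) : Prop :=
  ∃ (i : Fin n) (a : K) (f : MvPolynomial (Fin n) K), a ≠ 0 ∧
    MvPolynomial.degreeOf i f = 0 ∧
    ρ (X i) = C a * X i + f ∧ ∀ j : Fin n, j ≠ i → ρ (X j) = X j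

/-- `ρ` commutes with the derivation `D`, i.e. `ρ ∘ D = D ∘ ρ`. -/
def CommutesWith {K A : Type*} [CommRing K] [CommRing A] [Algebra K A]
    (ρ : A ≃ₐ[K] A) (D : Derivation K A A) : Prop :=
  ∀ p : A, ρ (D p) = D (ρ p)

/-- The tame isotropy group of `D`: the subgroup of the automorphism group generated by the
elementary automorphisms commuting with `D`. -/
noncomputable def tameIsotropy {K : Type*} [CommRing K] {n : ℕ}
    (D : Derivation K (MvPolynomial (Fin n) K) (MvPolynomial (Fin n) K)) :
    Subgroup (MvPolynomial (Fin n) K ≃ₐ[K] MvPolynomial (Fin n) K) :=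
  Subgroup.closure {ρ | IsElementary ρ ∧ CommutesWith ρ D}

/-- A derivation is simple if the only `D`-stable ideals are `⊥` and `⊤`. -/
def IsSimpleDerivation {K A : Type*} [CommRing K] [CommRing A] [Algebra K A]
    (D : Derivation K A A) : Prop :=
  ∀ I : Ideal A, (∀ x ∈ I, D x ∈ I) → I = ⊥ ∨ I = ⊤

/-- A translation of `K[X_1,…,X_n]`: each variable `X j` is sent to `X j + c j`. -/
def IsTranslation {K : Type*} [CommSemiring K] {n : ℕ}
    (ρ : MvPolynomial (Fin n) K ≃ₐ[K] MvPolynomial (Fin n) K) : Prop :=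
  ∃ c : Fin n → K, ∀ j : Fin n, ρ (X j) = X j + C (c j)


section Aux

open Polynomial in
lemma aux_deriv_sum_apply {R A M : Type*} [CommSemiring R] [CommSemiring A] [Algebra R A]
    [AddCommMonoid M] [Module A M] [Module R M] {ι : Type*} (s : Finset ι)
    (f : ι → Derivation R A M) (x : A) : (∑ j ∈ s, f j) x = ∑ j ∈ s, f j x := by
  induction s using Finset.cons_induction with
  | empty => simp
  | cons j s hj ih => rw [Finset.sum_cons, Finset.sum_cons, Derivation.add_apply, ih]

lemma aux_degreeOf {K : Type*} [CommRing K] [Nontrivial K] {m : ℕ} {j : Fin (m + 1)}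
    (hj : j ≠ 0) (p : Polynomial K) :
    MvPolynomial.degreeOf j (Polynomial.aeval (X 0 : MvPolynomial (Fin (m + 1)) K) p) = 0 := by
  induction p using Polynomial.induction_on with
  | C c => simpa using degreeOf_C c j
  | add p q hp hq =>
      rw [map_add]
      exact Nat.le_zero.mp ((degreeOf_add_le _ _ _).trans (by simp [hp, hq]))
  | monomial k c ih =>
      rw [pow_succ, ← mul_assoc, map_mul]
      refine Nat.le_zero.mp ((degreeOf_mul_le _ _ _).trans ?_)
      rw [ih, Polynomial.aeval_X]
      simp [degreeOf_X, hj]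

end Aux

/-- Let `D = ∂/∂X + Σ (a_i(X)·Y_i + b_i(X))·∂/∂Y_i` be a Shamsuddin derivation of
`K[X,Y_1,…,Y_n]`, `n ≥ 1`. If for some index `i` there is `h ∈ K[X]` with
`h' = a_i·h + b_i`, then the elementary automorphism `σ` with `σ(X) = X`,
`σ(Y_i) = 2Y_i − h(X)` and `σ(Y_j) = Y_j` for `j ≠ i` commutes with `D`; in particular
`σ ≠ id` and `Tame_D ≠ {id}`. -/
theorem stmt_17 {K : Type*} [Field K] [CharZero K] [IsAlgClosed K]
    (n : ℕ) (hn : 1 ≤ n) (a b : Fin n → Polynomial K)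
    (D : Derivation K (MvPolynomial (Fin (n + 1)) K) (MvPolynomial (Fin (n + 1)) K))
    (hD : D = pderiv (0 : Fin (n + 1)) + ∑ i : Fin n,
      (Polynomial.aeval (X 0 : MvPolynomial (Fin (n + 1)) K) (a i) * X i.succ
        + Polynomial.aeval (X 0 : MvPolynomial (Fin (n + 1)) K) (b i)) • pderiv i.succ)
    (i : Fin n) (h : Polynomial K)
    (hh : Polynomial.derivative h = a i * h + b i) :
    ∃ σ : MvPolynomial (Fin (n + 1)) K ≃ₐ[K] MvPolynomial (Fin (n + 1)) K,
      σ (X 0) = X 0 ∧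
      σ (X i.succ) = 2 * X i.succ
        - Polynomial.aeval (X 0 : MvPolynomial (Fin (n + 1)) K) h ∧
      (∀ j : Fin n, j ≠ i → σ (X j.succ) = X j.succ) ∧
      IsElementary σ ∧ CommutesWith σ D ∧ σ ≠ 1 ∧ tameIsotropy D ≠ ⊥ := by
  classical
  set R := MvPolynomial (Fin (n + 1)) K with hR
  set H : R := Polynomial.aeval (X 0 : R) h with hHdef
  set A : Fin n → R := fun j => Polynomial.aeval (X 0 : R) (a j) with hA
  set B : Fin n → R := fun j => Polynomial.aeval (X 0 : R) (b j) with hB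
  set F : Fin (n + 1) → R := fun k => if k = i.succ then 2 * X k - H else X k with hF
  set G : Fin (n + 1) → R := fun k => if k = i.succ then C (2⁻¹ : K) * (X k + H) else X k with hG
  have hC2 : (C (2 : K) : R) = 2 := map_ofNat C 2
  have htwo : (C (2⁻¹ : K) : R) * 2 = 1 := by
    rw [← hC2, ← map_mul, inv_mul_cancel₀ (two_ne_zero), map_one]
  have hF0 : F 0 = X 0 := by simp [hF, (Fin.succ_ne_zero i).symm]
  have hG0 : G 0 = X 0 := by simp [hG, (Fin.succ_ne_zero i).symm]
  have haevalH : ∀ (φ : R →ₐ[K] R), φ (X 0) = X 0 →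
      ∀ p : Polynomial K, φ (Polynomial.aeval (X 0 : R) p) = Polynomial.aeval (X 0 : R) p := by
    intro φ hφ p
    rw [← Polynomial.aeval_algHom_apply, hφ]
  have hFG : (aeval F).comp (aeval G) = AlgHom.id K R := by
    apply algHom_ext
    intro k
    by_cases hk : k = i.succ
    · subst hk
      simp only [AlgHom.comp_apply, aeval_X, AlgHom.id_apply]
      rw [show G i.succ = C (2⁻¹ : K) * (X i.succ + H) from if_pos rfl,
        map_mul, map_add, aeval_C, algebraMap_eq, aeval_X,
        show F i.succ = 2 * X i.succ - H from if_pos rfl,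
        haevalH (aeval F) (by rw [aeval_X, hF0]) h,
        sub_add_cancel, ← mul_assoc, htwo, one_mul]
      rfl
    · simp [hG, hk, hF]; rfl
  have hGF : (aeval G).comp (aeval F) = AlgHom.id K R := by
    apply algHom_ext
    intro k
    by_cases hk : k = i.succ
    · subst hk
      simp only [AlgHom.comp_apply, aeval_X, AlgHom.id_apply]
      rw [show F i.succ = 2 * X i.succ - H from if_pos rfl, map_sub, map_mul,
        map_ofNat, aeval_X, show G i.succ = C (2⁻¹ : K) * (X i.succ + H) from if_pos rfl,
        haevalH (aeval G) (by rw [aeval_X, hG0]) h, ← mul_assoc,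
        mul_comm (2 : R) (C (2⁻¹ : K)), htwo, one_mul, add_sub_cancel_right]
      rfl
    · simp [hF, hk, hG]; rfl
  set σ : R ≃ₐ[K] R := AlgEquiv.ofAlgHom (aeval F) (aeval G) hFG hGF with hσdef
  have hσapp : ∀ p : R, σ p = aeval F p := fun _ => rfl
  have hσ0 : σ (X 0) = X 0 := by rw [hσapp, aeval_X, hF0]
  have hσi : σ (X i.succ) = 2 * X i.succ - H := by
    rw [hσapp, aeval_X]; exact if_pos rfl
  have hσj : ∀ j : Fin n, j ≠ i → σ (X j.succ) = X j.succ := by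
    intro j hj
    rw [hσapp, aeval_X]
    exact if_neg (fun e => hj (Fin.succ_injective n e))
  have hσH : ∀ p : Polynomial K, σ (Polynomial.aeval (X 0 : R) p) = Polynomial.aeval (X 0 : R) p :=
    haevalH σ.toAlgHom (by exact hσ0)
  have hDX0 : D (X 0) = 1 := by
    rw [hD, Derivation.add_apply, aux_deriv_sum_apply, pderiv_X_self,
      Finset.sum_eq_zero, add_zero]
    intro j _
    rw [Derivation.smul_apply, pderiv_X_of_ne (Fin.succ_ne_zero j).symm, smul_zero]
  have hDXsucc : ∀ j : Fin n, D (X j.succ) = A j * X j.succ + B j := by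
    intro j
    rw [hD, Derivation.add_apply, aux_deriv_sum_apply, pderiv_X_of_ne (Fin.succ_ne_zero j),
      zero_add, Finset.sum_eq_single j]
    · rw [Derivation.smul_apply, pderiv_X_self, smul_eq_mul, mul_one]
    · intro k _ hk
      rw [Derivation.smul_apply,
        pderiv_X_of_ne (fun e => hk (Fin.succ_injective n e.symm)), smul_zero]
    · intro hj; exact absurd (Finset.mem_univ j) hj
  have hDH : D H = A i * H + B i := by
    rw [hHdef, Derivation.map_aeval, hDX0, smul_eq_mul, mul_one, hh, map_add, map_mul]
  have hgen : ∀ k : Fin (n + 1), σ (D (X k)) = D (σ (X k)) := by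
    intro k
    induction k using Fin.cases with
    | zero => rw [hDX0, map_one, hσ0, hDX0]
    | succ j =>
      by_cases hj : j = i
      · subst hj
        rw [hDXsucc j, map_add, map_mul, hσH (a j), hσH (b j), hσi, map_sub, two_mul,
          map_add, hDXsucc j, hDH]
        ring
      · rw [hDXsucc j, map_add, map_mul, hσH (a j), hσH (b j), hσj j hj, hDXsucc j]
  have hcomm : CommutesWith σ D := by
    intro p
    induction p using MvPolynomial.induction_on with
    | C c =>
        rw [show (C c : R) = algebraMap K R c from rfl, Derivation.map_algebraMap,
          map_zero, AlgEquiv.commutes, Derivation.map_algebraMap]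
    | add p q hp hq => simp only [map_add, hp, hq]
    | mul_X p k hp =>
        simp only [Derivation.leibniz, smul_eq_mul, map_add, map_mul, hp, hgen k]
  have hdegH : ∀ j : Fin (n + 1), j ≠ 0 → degreeOf j H = 0 :=
    fun j hj => aux_degreeOf hj h
  have hel : IsElementary σ := by
    refine ⟨i.succ, 2, -H, two_ne_zero, ?_, ?_, ?_⟩
    · rw [show (-H : R) = Polynomial.aeval (X 0 : R) (-h) by rw [map_neg, hHdef]]
      exact aux_degreeOf (Fin.succ_ne_zero i) (-h)
    · rw [hσi, hC2]; ring
    · intro j hj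
      induction j using Fin.cases with
      | zero => exact hσ0
      | succ j' => exact hσj j' (fun e => hj (by rw [e]))
  have hne : σ ≠ 1 := by
    intro he
    have h1 : (2 : R) * X i.succ - H = X i.succ := by
      rw [← hσi, he, AlgEquiv.one_apply]
    have hHX : H = X i.succ := by linear_combination -h1
    have h0 : degreeOf i.succ H = 0 := hdegH i.succ (Fin.succ_ne_zero i)
    rw [hHX] at h0
    simp [degreeOf_X] at h0
  refine ⟨σ, hσ0, hσi, hσj, hel, hcomm, hne, ?_⟩
  intro hb
  have hmem : σ ∈ tameIsotropy D := Subgroup.subset_closure ⟨hel, hcomm⟩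
  rw [hb, Subgroup.mem_bot] at hmem
  exact hne hmem
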